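/- Let F̃_m(s) denote the value C₁ of the continued fraction recursion terminated with C_m(s) = (s γ̂_m)^{-1} (i.e., the last floor γ_m is omitted), with C_i(s) = (s γ̂_i + (γ_i + C_{i+1}(s))^{-1})^{-1} for i < m, built from symmetric positive definite p×p matrices. Then for fixed s > 0 the sequence m ↦ F̃_m(s) is strictly decreasing in the Loewner order: F̃_m(s) < F̃_{m-1}(s). -/

import Mathlib

open Matrix

section Helpers

variable {n : Type*} [Fintype n] [DecidableEq n]

omit [DecidableEq n] in
lemma posDef_add' {A B : Matrix n n ℝ} (hA : A.PosDef) (hB : B.PosDef) : (A + B).PosDef := by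
  refine posDef_iff_dotProduct_mulVec.mpr ⟨hA.1.add hB.1, fun x hx => ?_⟩
  simp only [add_mulVec, dotProduct_add]
  exact add_pos (hA.dotProduct_mulVec_pos hx) (hB.dotProduct_mulVec_pos hx)

omit [DecidableEq n] in
lemma posDef_smul' {A : Matrix n n ℝ} (hA : A.PosDef) {c : ℝ} (hc : 0 < c) : (c • A).PosDef := by
  refine posDef_iff_dotProduct_mulVec.mpr ⟨?_, fun x hx => ?_⟩
  · rw [Matrix.IsHermitian, conjTranspose_smul, star_trivial, hA.1.eq]
  · simp only [smul_mulVec, dotProduct_smul, smul_eq_mul]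
    exact mul_pos hc (hA.dotProduct_mulVec_pos hx)

lemma posDef_conj' {A B : Matrix n n ℝ} (hA : A.PosDef) (hB : IsUnit B) :
    (Bᴴ * A * B).PosDef := by
  refine PosDef.of_dotProduct_mulVec_pos (isHermitian_conjTranspose_mul_mul B hA.1) fun x hx => ?_
  have hBx : B *ᵥ x ≠ 0 := by
    intro h
    exact hx (Matrix.mulVec_injective_iff_isUnit.2 hB (by simpa using h))
  simpa only [star_mulVec, dotProduct_mulVec, vecMul_vecMul] using hA.dotProduct_mulVec_pos hBx

/-- If `A` is positive definite and `B - A` is positive definite, then `A⁻¹ - B⁻¹` is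
positive definite (antitonicity of the inverse in the Loewner order). -/
lemma posDef_inv_sub_inv' {A B : Matrix n n ℝ} (hA : A.PosDef) (hBA : (B - A).PosDef) :
    (A⁻¹ - B⁻¹).PosDef := by
  have hB : B.PosDef := by simpa using posDef_add' hA hBA
  have hAd : IsUnit A.det := (Matrix.isUnit_iff_isUnit_det A).mp hA.isUnit
  have hBd : IsUnit B.det := (Matrix.isUnit_iff_isUnit_det B).mp hB.isUnit
  have hid : A⁻¹ - B⁻¹ = B⁻¹ * ((B - A) * A⁻¹ * (B - A) + (B - A)) * B⁻¹ := by
    letI := A.invertibleOfIsUnitDet hAd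
    letI := B.invertibleOfIsUnitDet hBd
    rw [← invOf_eq_nonsing_inv A, ← invOf_eq_nonsing_inv B]
    simp only [Matrix.mul_sub, Matrix.sub_mul, Matrix.mul_add, Matrix.add_mul, Matrix.mul_assoc,
      invOf_mul_self, Matrix.mul_one, Matrix.one_mul, mul_invOf_self,
      invOf_mul_cancel_left, mul_invOf_cancel_left]
    abel
  -- (B - A) * A⁻¹ * (B - A) is positive definite (congruence by the invertible matrix B - A)
  have hconj : ((B - A) * A⁻¹ * (B - A)).PosDef := by
    have := posDef_conj' hA.inv hBA.isUnit
    rwa [hBA.1.eq] at this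
  have hmid : ((B - A) * A⁻¹ * (B - A) + (B - A)).PosDef := posDef_add' hconj hBA
  have := posDef_conj' hmid hB.inv.isUnit
  rwa [hB.inv.1.eq, ← hid] at this

end Helpers

/-- `cfracR s γ γh i k` is the Gauss-Radau matrix continued fraction `C_i(s)` with `k` floors
remaining: `C_i = (s γ̂_i + (γ_i + C_{i+1})⁻¹)⁻¹` for `k ≥ 2`, terminated with the last floor
`(s γ̂)⁻¹` (the last `γ` is omitted, i.e. `C_{m+1} = +∞`).
The Gauss-Radau approximation of depth `m ≥ 1` is `F̃_m(s) = cfracR s γ γh 1 m`. -/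
noncomputable def cfracR {p : ℕ} (s : ℝ) (γ γh : ℕ → Matrix (Fin p) (Fin p) ℝ) :
    ℕ → ℕ → Matrix (Fin p) (Fin p) ℝ
  | _, 0 => 0
  | i, 1 => (s • γh i)⁻¹
  | i, k + 2 => (s • γh i + (γ i + cfracR s γ γh (i + 1) (k + 1))⁻¹)⁻¹

section CfracR

variable {p : ℕ} (s : ℝ) (γ γh : ℕ → Matrix (Fin p) (Fin p) ℝ)
  (hγ : ∀ i, (γ i).PosDef) (hγh : ∀ i, (γh i).PosDef) (hs : 0 < s)

include hγ hγh hs in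
lemma cfracR_posDef : ∀ k i, (cfracR s γ γh i (k + 1)).PosDef := by
  intro k
  induction k with
  | zero => exact fun i => (posDef_smul' (hγh i) hs).inv
  | succ k ih =>
    intro i
    show ((s • γh i + (γ i + cfracR s γ γh (i + 1) (k + 1))⁻¹)⁻¹).PosDef
    exact (posDef_add' (posDef_smul' (hγh i) hs) (posDef_add' (hγ i) (ih (i + 1))).inv).inv

include hγ hγh hs in
lemma cfracR_sub_posDef :
    ∀ k i, (cfracR s γ γh i (k + 1) - cfracR s γ γh i (k + 2)).PosDef := by
  intro k
  induction k with
  | zero =>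
    intro i
    show ((s • γh i)⁻¹ - (s • γh i + (γ i + cfracR s γ γh (i + 1) 1)⁻¹)⁻¹).PosDef
    refine posDef_inv_sub_inv' (posDef_smul' (hγh i) hs) ?_
    have h1 : (γ i + cfracR s γ γh (i + 1) 1).PosDef :=
      posDef_add' (hγ i) (cfracR_posDef s γ γh hγ hγh hs 0 (i + 1))
    simpa using h1.inv
  | succ k ih =>
    intro i
    show ((s • γh i + (γ i + cfracR s γ γh (i + 1) (k + 1))⁻¹)⁻¹
        - (s • γh i + (γ i + cfracR s γ γh (i + 1) (k + 2))⁻¹)⁻¹).PosDef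
    set X := cfracR s γ γh (i + 1) (k + 1) with hX
    set Y := cfracR s γ γh (i + 1) (k + 2) with hY
    have hXY : (X - Y).PosDef := ih (i + 1)
    have hYpd : Y.PosDef := cfracR_posDef s γ γh hγ hγh hs (k + 1) (i + 1)
    have hgY : (γ i + Y).PosDef := posDef_add' (hγ i) hYpd
    -- (γ i + Y)⁻¹ - (γ i + X)⁻¹ is posdef
    have hinner : ((γ i + Y)⁻¹ - (γ i + X)⁻¹).PosDef := by
      refine posDef_inv_sub_inv' hgY ?_
      simpa using hXY
    refine posDef_inv_sub_inv' (posDef_add' (posDef_smul' (hγh i) hs) (posDef_add' (hγ i)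
      (cfracR_posDef s γ γh hγ hγh hs k (i + 1))).inv) ?_
    simpa using hinner

end CfracR

/-- For fixed `s > 0`, the sequence of Gauss-Radau continued fractions `m ↦ F̃_m(s)` is
strictly decreasing in the Loewner order: `F̃_{m+1}(s) < F̃_m(s)`. -/
theorem stmt_7 (p : ℕ) (γ γh : ℕ → Matrix (Fin p) (Fin p) ℝ)
    (hγ : ∀ i, (γ i).PosDef) (hγh : ∀ i, (γh i).PosDef) (s : ℝ) (hs : 0 < s) :
    ∀ m : ℕ, 1 ≤ m → (cfracR s γ γh 1 m - cfracR s γ γh 1 (m + 1)).PosDef := by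
  intro m hm
  obtain ⟨k, rfl⟩ := Nat.exists_eq_add_of_le hm
  have h := cfracR_sub_posDef s γ γh hγ hγh hs k 1
  convert h using 3 <;> omega
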